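/- Let R be a ring. The functor L : Mod_R → CondMod_R, sending an R-module M to the condensed R-module LocConst(−, M) of locally constant maps, is fully faithful. -/
import Mathlib


universe u

open CategoryTheory

/-- Let `R` be a ring. The functor `L : Mod_R ⥤ CondMod_R`, sending an `R`-module `M` to the
condensed `R`-module `LocConst(−, M)` of locally constant maps, is fully faithful. -/
theorem locallyConstant_functor_condensedMod_full_and_faithful (R : Type (u + 1)) [Ring R] :
    (CondensedMod.LocallyConstant.functor.{u} R).Full ∧
      (CondensedMod.LocallyConstant.functor.{u} R).Faithful := by
  exact ⟨inferInstance, inferInstance⟩
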